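/- Let (C, F) be a tame infinite Galois category with fundamental group π = π₁(C, F), so that F induces an equivalence C ≃ π-Set (sets with continuous π-action). Let C' be a strictly full subcategory of C such that: (a) an object of C' is categorically connected in C' if and only if it is categorically connected in C; (b) an object of C lies in C' (up to isomorphism) if and only if all its categorically connected components lie in C'; (c) C' is closed under small colimits and finite limits in C. Then (C', F|_{C'}) is itself a tame infinite Galois category. -/

import Mathlib

open CategoryTheory Limits

universe v u

/-- An object `Y` of a category is *categorically connected* if every monomorphism into `Y`
from a non-initial object is an isomorphism. -/
def CategoricallyConnected {C : Type*} [Category C] (Y : C) : Prop :=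
  ∀ (Z : C) (f : Z ⟶ Y), Mono f → ¬ Nonempty (IsInitial Z) → IsIso f

/-- `(C, F)` is a *tame infinite Galois category*: `C` is cocomplete and finitely complete,
every object is a coproduct of categorically connected objects, a set of connected objects
generates `C` under colimits, the fiber functor `F` is faithful, conservative, cocontinuous
and finitely continuous, and moreover the fundamental group `π₁(C, F) = Aut(F)` acts
transitively on `F X` for every categorically connected object `X` (tameness). -/
structure IsTameInfiniteGaloisCategory (C : Type u) [Category.{v} C]
    (F : C ⥤ Type v) : Prop where
  hasColimits : HasColimits C
  hasFiniteLimits : HasFiniteLimits C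
  /-- every object is a coproduct of categorically connected objects -/
  decomp : ∀ X : C, ∃ (ι : Type v) (g : ι → C) (c : Cofan g),
    Nonempty (IsColimit c) ∧ (∀ i, CategoricallyConnected (g i)) ∧ Nonempty (c.pt ≅ X)
  /-- a set of connected objects generates `C` under colimits -/
  generator : ∃ (ι : Type v) (g : ι → C), (∀ i, CategoricallyConnected (g i)) ∧
    ∀ X : C, ∃ (Jc : Type v) (_ : SmallCategory Jc) (D : Jc ⥤ C) (c : Cocone D),
      Nonempty (IsColimit c) ∧ Nonempty (c.pt ≅ X) ∧
        ∀ j, ∃ i, Nonempty (D.obj j ≅ g i)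
  faithful : F.Faithful
  conservative : F.ReflectsIsomorphisms
  cocontinuous : Nonempty (PreservesColimits F)
  finitelyContinuous : Nonempty (PreservesFiniteLimits F)
  /-- tameness: `Aut F` acts transitively on the fiber of every connected object -/
  tame : ∀ X : C, CategoricallyConnected X →
    ∀ x y : F.obj X, ∃ σ : Aut F, σ.hom.app X x = y

section Aux

variable {C : Type u} [Category.{v} C] (F : C ⥤ Type v)

lemma aux_bot_empty [HasColimits C] [PreservesColimits F] :
    IsEmpty (F.obj (⊥_ C)) := by
  have h : IsColimit (F.mapCocone (asEmptyCocone (⊥_ C))) :=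
    isColimitOfPreserves F initialIsInitial
  refine ⟨fun x => ?_⟩
  exact PEmpty.elim (h.desc ⟨PEmpty.{v+1}, Discrete.natTrans (fun j => j.as.elim)⟩ x)

lemma aux_initial_of_empty [HasColimits C] [F.ReflectsIsomorphisms]
    (hbot : IsEmpty (F.obj (⊥_ C))) (X : C) (hX : IsEmpty (F.obj X)) :
    Nonempty (IsInitial X) := by
  have : IsIso (F.map (initial.to X)) := by
    rw [isIso_iff_bijective]
    exact ⟨fun a => hbot.elim a, fun b => hX.elim b⟩
  have : IsIso (initial.to X) := isIso_of_reflects_iso _ F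
  exact ⟨IsInitial.ofIso initialIsInitial (asIso (initial.to X))⟩

lemma aux_conn_initial [HasColimits C] [F.ReflectsIsomorphisms]
    (hbot : IsEmpty (F.obj (⊥_ C))) :
    CategoricallyConnected (⊥_ C) := by
  intro Z f _ hZ
  have hZempty : IsEmpty (F.obj Z) := ⟨fun z => hbot.false (F.map f z)⟩
  exact absurd (aux_initial_of_empty F hbot Z hZempty) hZ

lemma aux_coeq_iso [HasColimits C] [HasFiniteLimits C] [F.ReflectsIsomorphisms]
    [PreservesColimits F] [PreservesFiniteLimits F]
    {G X : C} (f : G ⟶ X) (hf : Function.Surjective (F.map f)) :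
    IsIso (coequalizer.desc f pullback.condition :
      coequalizer (pullback.fst f f) (pullback.snd f f) ⟶ X) := by
  set a := pullback.fst f f with ha
  set b := pullback.snd f f with hb
  set q := coequalizer.π a b with hqdef
  set u : coequalizer a b ⟶ X := coequalizer.desc f pullback.condition with hu
  have hqu : q ≫ u = f := coequalizer.π_desc f _
  have hq : Function.Surjective (F.map q) := by
    rw [← epi_iff_surjective]
    infer_instance
  have hFu : Function.Bijective (F.map u) := by
    constructor
    · intro p₁ p₂ hp
      obtain ⟨s, rfl⟩ := hq p₁
      obtain ⟨t, rfl⟩ := hq p₂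
      have hst : F.map f s = F.map f t := by
        rw [← hqu, FunctorToTypes.map_comp_apply, FunctorToTypes.map_comp_apply, hp]
      have hl := isLimitOfHasPullbackOfPreservesLimit F f f
      set r : F.obj (pullback f f) :=
        PullbackCone.IsLimit.lift hl (TypeCat.ofHom fun _ : PUnit.{v+1} => s)
          (TypeCat.ofHom fun _ => t) (by ext; simpa using hst) PUnit.unit with hr
      have hra : F.map a r = s :=
        types_congr_hom (PullbackCone.IsLimit.lift_fst hl _ _ _) PUnit.unit
      have hrb : F.map b r = t :=
        types_congr_hom (PullbackCone.IsLimit.lift_snd hl _ _ _) PUnit.unit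
      calc F.map q s = F.map q (F.map a r) := by rw [hra]
        _ = F.map (a ≫ q) r := (FunctorToTypes.map_comp_apply F a q r).symm
        _ = F.map (b ≫ q) r := by rw [coequalizer.condition]
        _ = F.map q (F.map b r) := FunctorToTypes.map_comp_apply F b q r
        _ = F.map q t := by rw [hrb]
    · intro y
      obtain ⟨z, hz⟩ := hf y
      exact ⟨F.map q z, by rw [← FunctorToTypes.map_comp_apply, hqu, hz]⟩
  have : IsIso (F.map u) := (isIso_iff_bijective _).2 hFu
  exact isIso_of_reflects_iso u F

lemma aux_iso_of_same_ker [HasColimits C] [HasFiniteLimits C] [F.Faithful]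
    [F.ReflectsIsomorphisms] [PreservesColimits F] [PreservesFiniteLimits F]
    {G X X' : C} (f : G ⟶ X) (f' : G ⟶ X')
    (hf : Function.Surjective (F.map f)) (hf' : Function.Surjective (F.map f'))
    (hker : ∀ s t, F.map f s = F.map f t ↔ F.map f' s = F.map f' t) :
    Nonempty (X ≅ X') := by
  set a := pullback.fst f f
  set b := pullback.snd f f
  set a' := pullback.fst f' f'
  set b' := pullback.snd f' f'
  set q : G ⟶ coequalizer a b := coequalizer.π a b with hqdef
  set q' : G ⟶ coequalizer a' b' := coequalizer.π a' b' with hq'def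
  set u : coequalizer a b ⟶ X := coequalizer.desc f pullback.condition with hu
  set u' : coequalizer a' b' ⟶ X' := coequalizer.desc f' pullback.condition with hu'
  haveI hui : IsIso u := aux_coeq_iso F f hf
  haveI hui' : IsIso u' := aux_coeq_iso F f' hf'
  have hqu : q ≫ u = f := coequalizer.π_desc f _
  have hqu' : q' ≫ u' = f' := coequalizer.π_desc f' _
  -- `q` identifies two points iff `f` does, and similarly for `q'`
  have hq'ker : ∀ s t, F.map f' s = F.map f' t → F.map q' s = F.map q' t := by
    intro s t h
    have hinj : Function.Injective (F.map u') :=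
      ((isIso_iff_bijective (F.map u')).1 inferInstance).1
    apply hinj
    rw [← FunctorToTypes.map_comp_apply, ← FunctorToTypes.map_comp_apply, hqu', h]
  have hqker : ∀ s t, F.map f s = F.map f t → F.map q s = F.map q t := by
    intro s t h
    have hinj : Function.Injective (F.map u) :=
      ((isIso_iff_bijective (F.map u)).1 inferInstance).1
    apply hinj
    rw [← FunctorToTypes.map_comp_apply, ← FunctorToTypes.map_comp_apply, hqu, h]
  have hcomm : a ≫ q' = b ≫ q' := by
    apply F.map_injective
    ext r
    simp only [Functor.map_comp, ConcreteCategory.comp_apply]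
    refine hq'ker _ _ ((hker _ _).1 ?_)
    show F.map f (F.map a r) = F.map f (F.map b r)
    rw [← FunctorToTypes.map_comp_apply, ← FunctorToTypes.map_comp_apply,
      pullback.condition]
  have hcomm' : a' ≫ q = b' ≫ q := by
    apply F.map_injective
    ext r
    simp only [Functor.map_comp, ConcreteCategory.comp_apply]
    refine hqker _ _ ((hker _ _).2 ?_)
    show F.map f' (F.map a' r) = F.map f' (F.map b' r)
    rw [← FunctorToTypes.map_comp_apply, ← FunctorToTypes.map_comp_apply,
      pullback.condition]
  set φ : coequalizer a b ⟶ coequalizer a' b' := coequalizer.desc q' hcomm with hφ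
  set ψ : coequalizer a' b' ⟶ coequalizer a b := coequalizer.desc q hcomm' with hψ
  have h1 : φ ≫ ψ = 𝟙 _ := by
    apply coequalizer.hom_ext
    rw [← Category.assoc]
    show (q ≫ φ) ≫ ψ = q ≫ 𝟙 _
    rw [hφ, coequalizer.π_desc]
    show q' ≫ ψ = q ≫ 𝟙 _
    rw [hψ, coequalizer.π_desc, Category.comp_id]
  have h2 : ψ ≫ φ = 𝟙 _ := by
    apply coequalizer.hom_ext
    rw [← Category.assoc]
    show (q' ≫ ψ) ≫ φ = q' ≫ 𝟙 _
    rw [hψ, coequalizer.π_desc]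
    show q ≫ φ = q' ≫ 𝟙 _
    rw [hφ, coequalizer.π_desc, Category.comp_id]
  exact ⟨(asIso u).symm ≪≫ Iso.mk φ ψ h1 h2 ≪≫ asIso u'⟩

lemma aux_cover [PreservesColimits F]
    {ι₀ : Type v} (g₀ : ι₀ → C)
    (hgen : ∀ X : C, ∃ (Jc : Type v) (_ : SmallCategory Jc) (D : Jc ⥤ C) (c : Cocone D),
      Nonempty (IsColimit c) ∧ Nonempty (c.pt ≅ X) ∧ ∀ j, ∃ i, Nonempty (D.obj j ≅ g₀ i))
    (htame : ∀ X : C, CategoricallyConnected X →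
      ∀ x y : F.obj X, ∃ σ : Aut F, σ.hom.app X x = y)
    (X : C) (hX : CategoricallyConnected X) (x0 : F.obj X) :
    ∃ (i : ι₀) (f : g₀ i ⟶ X), Function.Surjective (F.map f) := by
  obtain ⟨Jc, _, D, c, ⟨hc⟩, ⟨e⟩, hobj⟩ := hgen X
  have hFc : IsColimit (F.mapCocone c) := isColimitOfPreserves F hc
  obtain ⟨j, y, hy⟩ := Types.jointly_surjective _ hFc (F.map e.inv x0)
  obtain ⟨i, ⟨e2⟩⟩ := hobj j
  have hy' : F.map (c.ι.app j) y = F.map e.inv x0 := hy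
  set f : g₀ i ⟶ X := e2.inv ≫ c.ι.app j ≫ e.hom with hf
  have hx0 : F.map f (F.map e2.hom y) = x0 := by
    rw [hf]
    rw [← FunctorToTypes.map_comp_apply, Iso.hom_inv_id_assoc,
      FunctorToTypes.map_comp_apply, hy', ← FunctorToTypes.map_comp_apply,
      Iso.inv_hom_id, FunctorToTypes.map_id_apply]
  refine ⟨i, f, ?_⟩
  intro y0
  obtain ⟨σ, hσ⟩ := htame X hX x0 y0
  refine ⟨σ.hom.app (g₀ i) (F.map e2.hom y), ?_⟩
  have hnat : σ.hom.app X (F.map f (F.map e2.hom y)) =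
      F.map f (σ.hom.app (g₀ i) (F.map e2.hom y)) :=
    types_congr_hom (σ.hom.naturality f) (F.map e2.hom y)
  rw [hx0, hσ] at hnat
  exact hnat.symm

end Aux


/-- Let `(C, F)` be a tame infinite Galois category and let `C'` be a strictly
full subcategory (given by an isomorphism-closed predicate `P` on objects) such that:
(a) an object of `C'` is categorically connected in `C'` iff it is so in `C`;
(b) an object of `C` lies in `C'` iff all its categorically connected components lie in `C'`;
(c) `C'` is closed under small colimits and finite limits in `C`.
Then `(C', F|_{C'})` is a tame infinite Galois category. -/
theorem stmt15 {C : Type u} [Category.{v} C] (F : C ⥤ Type v) (P : C → Prop)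
    (hiso : ∀ {X Y : C}, Nonempty (X ≅ Y) → (P X ↔ P Y))
    (hC : IsTameInfiniteGaloisCategory C F)
    (ha : ∀ X : ObjectProperty.FullSubcategory P,
      CategoricallyConnected X ↔ CategoricallyConnected X.obj)
    (hb : ∀ (X : C) (ι : Type v) (g : ι → C) (c : Cofan g),
      Nonempty (IsColimit c) → (∀ i, CategoricallyConnected (g i)) →
        Nonempty (c.pt ≅ X) → (P X ↔ ∀ i, P (g i)))
    (hc₁ : ∀ (Jc : Type v) (_ : SmallCategory Jc) (D : Jc ⥤ C) (c : Cocone D),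
      Nonempty (IsColimit c) → (∀ j, P (D.obj j)) → P c.pt)
    (hc₂ : ∀ (Jc : Type v) (_ : SmallCategory Jc) (_ : FinCategory Jc)
      (D : Jc ⥤ C) (c : Cone D),
      Nonempty (IsLimit c) → (∀ j, P (D.obj j)) → P c.pt) :
    IsTameInfiniteGaloisCategory (ObjectProperty.FullSubcategory P)
      (ObjectProperty.ι P ⋙ F) := by
  classical
  obtain ⟨hColim, hFinLim, hdecomp, hgen, hfaith, hcons, ⟨hpc⟩, ⟨hpfl⟩, htame⟩ := hC
  haveI := hColim; haveI := hFinLim; haveI := hfaith; haveI := hcons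
  haveI := hpc; haveI := hpfl
  -- closure facts
  have closedC : ∀ (J : Type v) [SmallCategory J], ObjectProperty.IsClosedUnderColimitsOfShape P J := by
    intro J _
    constructor
    rintro X ⟨h⟩
    exact hc₁ J _ h.diag _ ⟨h.isColimit⟩ h.prop_diag_obj
  have closedL : ∀ (J : Type) [SmallCategory J] [FinCategory J],
      ObjectProperty.IsClosedUnderLimitsOfShape P J := by
    intro J _ _
    constructor
    rintro X ⟨h⟩
    exact hc₂ (ULiftHom.{v} (ULift.{v} J)) inferInstance inferInstance
      ((ULiftHomULiftCategory.equiv J).symm.functor ⋙ h.diag)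
      ((Cone.mk _ h.π).whisker (ULiftHomULiftCategory.equiv J).symm.functor)
      ⟨h.isLimit.whiskerEquivalence (ULiftHomULiftCategory.equiv J).symm⟩
      (fun j => h.prop_diag_obj _)
  haveI hasColim' : HasColimits (ObjectProperty.FullSubcategory P) :=
    { has_colimits_of_shape := fun J _ =>
        haveI := closedC J
        hasColimitsOfShape_of_closedUnderColimits (P := P) (J := J) }
  haveI hasFinLim' : HasFiniteLimits (ObjectProperty.FullSubcategory P) :=
    ⟨fun J _ _ => haveI := closedL J
      hasLimitsOfShape_of_closedUnderLimits (P := P) (J := J)⟩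
  -- the restricted fiber functor
  haveI inclPC : PreservesColimits (ObjectProperty.ι P) :=
    { preservesColimitsOfShape := fun {J} _ =>
        haveI := closedC J
        haveI := createsColimitsOfShapeFullSubcategoryInclusion (P := P) (J := J)
        inferInstance }
  haveI inclPFL : PreservesFiniteLimits (ObjectProperty.ι P) :=
    ⟨fun J _ _ =>
        haveI := closedL J
        haveI := createsLimitsOfShapeFullSubcategoryInclusion (P := P) (J := J)
        inferInstance⟩
  haveI refl' : (ObjectProperty.ι P ⋙ F).ReflectsIsomorphisms := by
    constructor
    intro A B f hf
    haveI : IsIso (F.map ((ObjectProperty.ι P).map f)) := hf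
    haveI := isIso_of_reflects_iso ((ObjectProperty.ι P).map f) F
    exact isIso_of_reflects_iso f (ObjectProperty.ι P)
  -- decomposition in the subcategory
  have decomp' : ∀ X : ObjectProperty.FullSubcategory P, ∃ (ι : Type v) (g : ι → ObjectProperty.FullSubcategory P)
      (c : Cofan g), Nonempty (IsColimit c) ∧ (∀ i, CategoricallyConnected (g i)) ∧
      Nonempty (c.pt ≅ X) := by
    intro X
    obtain ⟨ι, g, c, ⟨hc⟩, hconn, ⟨e⟩⟩ := hdecomp X.obj
    have hPg : ∀ i, P (g i) := (hb X.obj ι g c ⟨hc⟩ hconn ⟨e⟩).1 X.property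
    have hPpt : P c.pt := (hiso ⟨e⟩).2 X.property
    set g' : ι → ObjectProperty.FullSubcategory P := fun i => ⟨g i, hPg i⟩ with hg'def
    set c' : Cofan g' :=
      Cofan.mk (⟨c.pt, hPpt⟩ : ObjectProperty.FullSubcategory P) (fun i => ObjectProperty.homMk (c.inj i : g i ⟶ c.pt))
      with hc'def
    refine ⟨ι, g', c', ⟨?_⟩, fun i => (ha (g' i)).2 (hconn i), ?_⟩
    · haveI := closedC (Discrete ι)
      haveI := createsColimitsOfShapeFullSubcategoryInclusion (P := P) (J := Discrete ι)
      apply isColimitOfReflects (ObjectProperty.ι P)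
      let α : Discrete.functor g ≅ Discrete.functor g' ⋙ ObjectProperty.ι P :=
        Discrete.natIso fun i => Iso.refl _
      refine (IsColimit.precomposeHomEquiv α
        ((ObjectProperty.ι P).mapCocone c')) ?_
      refine hc.ofIsoColimit (Cocones.ext (Iso.refl _) ?_)
      rintro ⟨i⟩
      simp [α, c', Cofan.inj]
    · exact ⟨(ObjectProperty.ι P).preimageIso e⟩
  -- generator
  have hbot : IsEmpty (F.obj (⊥_ C)) := aux_bot_empty F
  have hPbot : P (⊥_ C) := by
    refine hc₁ (Discrete PEmpty.{v+1}) inferInstance (Functor.empty C)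
      ⟨⊥_ C, Discrete.natTrans (fun j => j.as.elim)⟩ ⟨?_⟩ (fun j => j.as.elim)
    exact { desc := fun s => initial.to s.pt, fac := fun s j => j.as.elim,
            uniq := fun s m _ => initialIsInitial.hom_ext m _ }
  set O' : ObjectProperty.FullSubcategory P := ⟨⊥_ C, hPbot⟩ with hO'
  have generator' : ∃ (ι : Type v) (g : ι → ObjectProperty.FullSubcategory P),
      (∀ i, CategoricallyConnected (g i)) ∧
      ∀ X : ObjectProperty.FullSubcategory P, ∃ (Jc : Type v) (_ : SmallCategory Jc)
        (D : Jc ⥤ ObjectProperty.FullSubcategory P) (c : Cocone D),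
        Nonempty (IsColimit c) ∧ Nonempty (c.pt ≅ X) ∧
          ∀ j, ∃ i, Nonempty (D.obj j ≅ g i) := by
    obtain ⟨ι₀, g₀, hg₀conn, hg₀gen⟩ := hgen
    set Code : Type v := Σ i : ι₀, Set (F.obj (g₀ i) × F.obj (g₀ i)) with hCode
    set Real : Code → ObjectProperty.FullSubcategory P → Prop := fun p Y =>
      CategoricallyConnected Y.obj ∧ ∃ f : g₀ p.1 ⟶ Y.obj,
        Function.Surjective (F.map f) ∧
        ∀ s t, ((s, t) ∈ p.2 ↔ F.map f s = F.map f t) with hReal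
    set ι' : Type v := {p : Code // ∃ Y, Real p Y} with hι'
    set g'' : ι' → ObjectProperty.FullSubcategory P := fun p => p.2.choose with hg''def
    have hg'' : ∀ p : ι', Real p.1 (g'' p) := fun p => p.2.choose_spec
    have keyiso : ∀ (p : Code) (Y Y' : ObjectProperty.FullSubcategory P),
        Real p Y → Real p Y' → Nonempty (Y ≅ Y') := by
      rintro p Y Y' ⟨-, f, hf, hkf⟩ ⟨-, f', hf', hkf'⟩
      obtain ⟨e⟩ := aux_iso_of_same_ker F f f' hf hf'
        (fun s t => ((hkf s t).symm.trans (hkf' s t)))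
      exact ⟨(ObjectProperty.ι P).preimageIso e⟩
    have classify : ∀ Y : ObjectProperty.FullSubcategory P, CategoricallyConnected Y.obj →
        F.obj Y.obj → ∃ i : ι', Nonempty (Y ≅ g'' i) := by
      intro Y hY x
      obtain ⟨i, f, hf⟩ := aux_cover F g₀ hg₀gen htame Y.obj hY x
      have hR : Real ⟨i, {st | F.map f st.1 = F.map f st.2}⟩ Y :=
        ⟨hY, f, hf, fun s t => Iff.rfl⟩
      exact ⟨⟨_, Y, hR⟩, keyiso _ _ _ hR (hg'' _)⟩
    refine ⟨ι' ⊕ PUnit.{v+1}, Sum.elim g'' (fun _ => O'), ?_, ?_⟩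
    · rintro (p | _)
      · exact (ha _).2 (hg'' p).1
      · exact (ha O').2 (aux_conn_initial F hbot)
    · intro X
      obtain ⟨ι, k, cf, ⟨hcf⟩, hconn', ⟨e⟩⟩ := decomp' X
      refine ⟨Discrete ι, inferInstance, Discrete.functor k, cf, ⟨hcf⟩, ⟨e⟩, ?_⟩
      rintro ⟨i⟩
      rcases isEmpty_or_nonempty (F.obj (k i).obj) with hE | hN
      · obtain ⟨hI⟩ := aux_initial_of_empty F hbot _ hE
        exact ⟨Sum.inr PUnit.unit,
          ⟨(ObjectProperty.ι P).preimageIso (hI.uniqueUpToIso initialIsInitial)⟩⟩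
      · obtain ⟨x⟩ := hN
        obtain ⟨i', hiso2⟩ := classify (k i) ((ha _).1 (hconn' i)) x
        exact ⟨Sum.inl i', hiso2⟩
  refine ⟨hasColim', hasFinLim', decomp', generator', inferInstance, refl',
    ⟨comp_preservesColimits _ _⟩, ⟨comp_preservesFiniteLimits _ _⟩, ?_⟩
  intro X hX x y
  obtain ⟨σ, hσ⟩ := htame X.obj ((ha X).1 hX) x y
  exact ⟨Functor.isoWhiskerLeft (ObjectProperty.ι P) σ, hσ⟩
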